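/- (Monotone decrease of the PDOM iteration.) Suppose x_{k+1} minimizes the function x ↦ h(x) + m_{γ,α}(x) over ℝ^n (the scaled proximal update), and suppose the backtracking (opportunistic majorization) condition q(x_{k+1}) ≤ m_α(x_{k+1}) holds. Then f(x_{k+1}) ≤ f(x_k). -/

import Mathlib

open scoped RealInnerProductSpace

/-- (Monotone decrease of the PDOM iteration.) Suppose `x_{k+1}` minimizes
`x ↦ h(x) + m_{γ,α}(x)` over `ℝⁿ` (the scaled proximal update), and the
backtracking (opportunistic majorization) condition `q(x_{k+1}) ≤ m_α(x_{k+1})`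
holds. Then `f(x_{k+1}) ≤ f(x_k)` where `f = q + h`. -/
theorem pdom_monotone_decrease {n : ℕ}
    (Q : EuclideanSpace ℝ (Fin n) →ₗ[ℝ] EuclideanSpace ℝ (Fin n))
    (hQsymm : ∀ x y : EuclideanSpace ℝ (Fin n), ⟪Q x, y⟫ = ⟪x, Q y⟫)
    (hQpd : ∀ x : EuclideanSpace ℝ (Fin n), x ≠ 0 → 0 < ⟪Q x, x⟫)
    (b : EuclideanSpace ℝ (Fin n))
    (q : EuclideanSpace ℝ (Fin n) → ℝ)
    (hq : ∀ x, q x = (1 / 2) * ⟪Q x, x⟫ + ⟪b, x⟫)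
    (h : EuclideanSpace ℝ (Fin n) → EReal)
    (hproper : ∃ x, h x ≠ ⊤) (hnobot : ∀ x, h x ≠ ⊥)
    (xk xk1 gα : EuclideanSpace ℝ (Fin n))
    (τα : ℝ) (hτα : 0 < τα) (γ : ℝ) (hγ₀ : 0 < γ) (hγ₁ : γ < 1)
    (mα mγα : EuclideanSpace ℝ (Fin n) → ℝ)
    (hmα : ∀ x, mα x = q xk + ⟪gα, x - xk⟫ + (1 / (2 * τα)) * ‖x - xk‖ ^ 2)
    (hmγα : ∀ x, mγα x = q xk + ⟪gα, x - xk⟫ + (1 / (2 * γ * τα)) * ‖x - xk‖ ^ 2)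
    (hmin : ∀ x, h xk1 + (mγα xk1 : EReal) ≤ h x + (mγα x : EReal))
    (hback : q xk1 ≤ mα xk1) :
    (q xk1 : EReal) + h xk1 ≤ (q xk : EReal) + h xk := by
  -- step 1: mα xk1 ≤ mγα xk1
  have hcoef : 1 / (2 * τα) ≤ 1 / (2 * γ * τα) := by
    apply one_div_le_one_div_of_le
    · positivity
    · nlinarith
  have h1 : mα xk1 ≤ mγα xk1 := by
    rw [hmα, hmγα]
    have : (1 / (2 * τα)) * ‖xk1 - xk‖ ^ 2 ≤ (1 / (2 * γ * τα)) * ‖xk1 - xk‖ ^ 2 := by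
      apply mul_le_mul_of_nonneg_right hcoef (by positivity)
    linarith
  have h2 : q xk1 ≤ mγα xk1 := le_trans hback h1
  -- step 2: mγα xk = q xk
  have h3 : mγα xk = q xk := by
    rw [hmγα]; simp
  have hmink := hmin xk
  rw [h3] at hmink
  calc (q xk1 : EReal) + h xk1 ≤ (mγα xk1 : EReal) + h xk1 := by
        exact add_le_add_left (EReal.coe_le_coe_iff.mpr h2) _
    _ = h xk1 + (mγα xk1 : EReal) := add_comm _ _
    _ ≤ h xk + (q xk : EReal) := hmink
    _ = (q xk : EReal) + h xk := add_comm _ _
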